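/- Fix an integer K ≥ 2 and reals w(i,j) for distinct i, j ∈ {1,…,K} with w(i,j) ≥ w(j,i) whenever i < j. For a permutation σ of {1,…,K}, define cost_w(σ) = Σ over ordered pairs (i,j) with i ≠ j and σ(j) < σ(i) of w(i,j). Fix k ∈ {1,…,K−1}. Then the minimum of cost_w(σ) over permutations σ with σ(k+1) = 1 equals Σ over ordered pairs (i,j) with i > j of w(i,j) plus Σ_{i=1}^k (w(i,k+1) − w(k+1,i)). -/

import Mathlib

/-- `cost_w(σ) = ∑_{(i,j) : i ≠ j, σ(j) < σ(i)} w i j`, the (rescaled) negative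
log-likelihood of the ranking `σ` under an Ordinal Attraction choice model,
where `σ i` is the position of item `i`. -/
def cost {K : ℕ} (w : Fin K → Fin K → ℝ) (σ : Equiv.Perm (Fin K)) : ℝ :=
  ∑ q ∈ Finset.univ.filter (fun q : Fin K × Fin K => q.1 ≠ q.2 ∧ σ q.2 < σ q.1),
    w q.1 q.2

lemma cost_pair_sum {K : ℕ} (w : Fin K → Fin K → ℝ) (σ : Equiv.Perm (Fin K)) :
    cost w σ = ∑ q ∈ Finset.univ.filter (fun q : Fin K × Fin K => q.2 < q.1),
      (if σ q.2 < σ q.1 then w q.1 q.2 else w q.2 q.1) := by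
  rw [Finset.sum_ite, Finset.filter_filter, Finset.filter_filter]
  unfold cost
  have hF : (Finset.univ.filter (fun q : Fin K × Fin K => q.1 ≠ q.2 ∧ σ q.2 < σ q.1))
      = (Finset.univ.filter (fun q : Fin K × Fin K => q.2 < q.1 ∧ σ q.2 < σ q.1))
        ∪ (Finset.univ.filter (fun q : Fin K × Fin K => q.1 < q.2 ∧ σ q.2 < σ q.1)) := by
    rw [← Finset.filter_or]
    apply Finset.filter_congr
    intro q _
    constructor
    · rintro ⟨h1, h2⟩
      rcases lt_or_gt_of_ne h1 with h | h
      · exact Or.inr ⟨h, h2⟩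
      · exact Or.inl ⟨h, h2⟩
    · rintro (⟨h1, h2⟩ | ⟨h1, h2⟩)
      · exact ⟨h1.ne', h2⟩
      · exact ⟨h1.ne, h2⟩
  rw [hF, Finset.sum_union]
  · congr 1
    refine Finset.sum_nbij' Prod.swap Prod.swap ?_ ?_ ?_ ?_ ?_
    · intro q hq
      simp only [Finset.mem_filter, Finset.mem_univ, true_and] at hq ⊢
      refine ⟨hq.1, ?_⟩
      intro hc
      exact absurd hq.2 (asymm hc)
    · intro q hq
      simp only [Finset.mem_filter, Finset.mem_univ, true_and] at hq ⊢
      obtain ⟨h1, h2⟩ := hq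
      refine ⟨h1, ?_⟩
      rcases lt_or_eq_of_le (not_lt.mp h2) with h | h
      · exact h
      · exact absurd (σ.injective h) h1.ne'
    · intro q _; exact Prod.swap_swap q
    · intro q _; exact Prod.swap_swap q
    · intro q _; rfl
  · rw [Finset.disjoint_filter]
    rintro q _ ⟨h1, _⟩ ⟨h2, _⟩
    exact absurd h1 (asymm h2)

lemma target_pair_sum {K : ℕ} (w : Fin K → Fin K → ℝ) (k : ℕ) (hk2 : k < K) :
    ((∑ q ∈ Finset.univ.filter (fun q : Fin K × Fin K => q.2 < q.1), w q.1 q.2)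
        + ∑ i ∈ Finset.univ.filter (fun i : Fin K => (i : ℕ) < k),
            (w i ⟨k, hk2⟩ - w ⟨k, hk2⟩ i))
    = ∑ q ∈ Finset.univ.filter (fun q : Fin K × Fin K => q.2 < q.1),
        (if q.1 = (⟨k, hk2⟩ : Fin K) then w q.2 q.1 else w q.1 q.2) := by
  have h1 : ∀ q ∈ Finset.univ.filter (fun q : Fin K × Fin K => q.2 < q.1),
      (if q.1 = (⟨k, hk2⟩ : Fin K) then w q.2 q.1 else w q.1 q.2)
      = w q.1 q.2 + (if q.1 = (⟨k, hk2⟩ : Fin K) then w q.2 q.1 - w q.1 q.2 else 0) := by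
    intro q _; split_ifs <;> ring
  rw [Finset.sum_congr rfl h1, Finset.sum_add_distrib]
  congr 1
  rw [← Finset.sum_filter, Finset.filter_filter]
  refine (Finset.sum_nbij' (fun i => ((⟨k, hk2⟩ : Fin K), i)) (fun q => q.2) ?_ ?_ ?_ ?_ ?_)
  · intro i hi
    simp only [Finset.mem_filter, Finset.mem_univ, true_and] at hi ⊢
    exact ⟨hi, trivial⟩
  · intro q hq
    simp only [Finset.mem_filter, Finset.mem_univ, true_and] at hq ⊢
    have h := hq.1
    rw [hq.2] at h
    exact h
  · intro i _; rfl
  · intro q hq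
    simp only [Finset.mem_filter, Finset.mem_univ, true_and] at hq
    exact Prod.ext hq.2.symm rfl
  · intro i _; rfl

/-- The permutation placing item `k` first and keeping relative order otherwise. -/
noncomputable def sig0 (K k : ℕ) (hk2 : k < K) : Equiv.Perm (Fin K) :=
  Equiv.ofBijective
    (fun i : Fin K => (⟨if i.val = k then 0 else if i.val < k then i.val + 1 else i.val,
      by split_ifs <;> omega⟩ : Fin K))
    (by
      rw [Fintype.bijective_iff_injective_and_card]
      refine ⟨?_, rfl⟩
      intro a b h
      have hv : (if a.val = k then 0 else if a.val < k then a.val + 1 else a.val)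
          = (if b.val = k then 0 else if b.val < k then b.val + 1 else b.val) :=
        congrArg Fin.val h
      apply Fin.ext
      split_ifs at hv <;> omega)

lemma sig0_val (K k : ℕ) (hk2 : k < K) (i : Fin K) :
    (sig0 K k hk2 i).val = if i.val = k then 0 else if i.val < k then i.val + 1 else i.val :=
  rfl

/-- Generalized likelihood for the hypothesis that (0-indexed) item `k` is
top-ranked: the minimum of `cost_w(σ)` over rankings placing item `k` first
equals `∑_{i > j} w i j + ∑_{i < k} (w i k − w k i)`. -/
theorem stmt14 (K : ℕ) (hK : 2 ≤ K) (w : Fin K → Fin K → ℝ)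
    (hw : ∀ i j : Fin K, i < j → w j i ≤ w i j)
    (k : ℕ) (hk1 : 1 ≤ k) (hk2 : k < K) :
    IsLeast { c : ℝ | ∃ σ : Equiv.Perm (Fin K),
        σ ⟨k, hk2⟩ = (⟨0, by omega⟩ : Fin K) ∧ c = cost w σ }
      ((∑ q ∈ Finset.univ.filter (fun q : Fin K × Fin K => q.2 < q.1), w q.1 q.2)
        + ∑ i ∈ Finset.univ.filter (fun i : Fin K => (i : ℕ) < k),
            (w i ⟨k, hk2⟩ - w ⟨k, hk2⟩ i)) := by
  constructor
  · refine ⟨sig0 K k hk2, ?_, ?_⟩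
    · apply Fin.ext
      rw [sig0_val]
      simp
    · rw [cost_pair_sum, target_pair_sum w k hk2]
      apply Finset.sum_congr rfl
      intro q hq
      simp only [Finset.mem_filter, Finset.mem_univ, true_and] at hq
      have hlt : q.2.val < q.1.val := hq
      by_cases h1 : q.1 = (⟨k, hk2⟩ : Fin K)
      · rw [if_pos h1, if_neg]
        rw [not_lt, Fin.le_def, sig0_val, sig0_val, h1]
        simp only
        have : q.2.val < k := by rw [h1] at hlt; exact hlt
        split_ifs <;> omega
      · rw [if_neg h1, if_pos]
        have h1v : q.1.val ≠ k := fun h => h1 (Fin.ext h)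
        rw [Fin.lt_def, sig0_val, sig0_val]
        split_ifs <;> omega
  · rintro c ⟨σ, hfix, rfl⟩
    rw [cost_pair_sum, target_pair_sum w k hk2]
    apply Finset.sum_le_sum
    intro q hq
    simp only [Finset.mem_filter, Finset.mem_univ, true_and] at hq
    by_cases h1 : q.1 = (⟨k, hk2⟩ : Fin K)
    · rw [if_pos h1, if_neg]
      rw [h1, hfix, not_lt, Fin.le_def]
      show (0:ℕ) ≤ _
      omega
    · rw [if_neg h1]
      split_ifs
      · exact le_refl _
      · exact hw q.2 q.1 hq
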